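/- Let q be a real number with 0 < q < 1 and let B be a closed subset of the interval [0,1] satisfying {1} ∪ B = {1} ∪ q²B. Then either B ⊆ {0} or B = {0} ∪ {q^{2k} : k ∈ ℕ}. -/

import Mathlib

/-- Let `q` be a real number with `0 < q < 1` and let `B` be a closed subset of
`[0,1]` satisfying `{1} ∪ B = {1} ∪ q²B`.  Then either `B ⊆ {0}` or
`B = {0} ∪ {q^(2k) : k ∈ ℕ}`. -/
theorem spectrum_dichotomy_of_closed_scaling_invariant
    (q : ℝ) (hq0 : 0 < q) (hq1 : q < 1)
    (B : Set ℝ) (hBclosed : IsClosed B) (hBsub : B ⊆ Set.Icc 0 1)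
    (hB : ({1} : Set ℝ) ∪ B = ({1} : Set ℝ) ∪ (fun x => q ^ 2 * x) '' B) :
    B ⊆ {0} ∨ B = ({0} : Set ℝ) ∪ {x : ℝ | ∃ k : ℕ, x = q ^ (2 * k)} := by
  by_cases hB0 : B ⊆ {0}
  · exact Or.inl hB0
  right
  have hq2 : (0:ℝ) < q ^ 2 := by positivity
  have hq2ne : (q:ℝ) ^ 2 ≠ 0 := ne_of_gt hq2
  have hq21 : q ^ 2 < 1 := by nlinarith
  have hforward : ∀ b ∈ B, b ≠ 1 → b / q ^ 2 ∈ B := by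
    intro b hb hb1
    have hmem : b ∈ ({1} : Set ℝ) ∪ (fun x => q ^ 2 * x) '' B := by
      rw [← hB]; exact Or.inr hb
    rcases hmem with h | ⟨c, hc, hcb⟩
    · exact absurd h hb1
    · have : b / q ^ 2 = c := by
        field_simp [← hcb]
        exact hcb.symm
      rw [this]; exact hc
  -- every positive element of B is a power q^(2k)
  have hpow : ∀ N : ℕ, ∀ b ∈ B, q ^ (2 * N) < b → ∃ k : ℕ, b = q ^ (2 * k) := by
    intro N
    induction N with
    | zero =>
      intro b hb h
      simp only [Nat.mul_zero, pow_zero] at h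
      exact absurd (hBsub hb).2 (not_le.2 h)
    | succ N ih =>
      intro b hb h
      by_cases hb1 : b = 1
      · exact ⟨0, by simp [hb1]⟩
      · have hmem := hforward b hb hb1
        have hlt : q ^ (2 * N) < b / q ^ 2 := by
          rw [lt_div_iff₀ hq2]
          calc q ^ (2 * N) * q ^ 2 = q ^ (2 * (N + 1)) := by ring
          _ < b := h
        obtain ⟨k, hk⟩ := ih (b / q ^ 2) hmem hlt
        refine ⟨k + 1, ?_⟩
        rw [div_eq_iff hq2ne] at hk
        rw [hk]; ring
  have hpos : ∀ b ∈ B, 0 < b → ∃ k : ℕ, b = q ^ (2 * k) := by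
    intro b hb hb0
    obtain ⟨N, hN⟩ := exists_pow_lt_of_lt_one hb0 hq21
    exact hpow N b hb (by rw [pow_mul]; exact hN)
  -- there is some power in B
  obtain ⟨b, hbB, hbne⟩ : ∃ b ∈ B, b ≠ 0 := by
    by_contra h
    push_neg at h
    exact hB0 (fun x hx => h x hx)
  have hbpos : 0 < b := lt_of_le_of_ne (hBsub hbB).1 (Ne.symm hbne)
  obtain ⟨n, hn⟩ := hpos b hbB hbpos
  have hnB : q ^ (2 * n) ∈ B := hn ▸ hbB
  -- going down: q^(2(k+1)) ∈ B → q^(2k) ∈ B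
  have hdown : ∀ k : ℕ, q ^ (2 * (k + 1)) ∈ B → q ^ (2 * k) ∈ B := by
    intro k hk
    have hne : q ^ (2 * (k + 1)) ≠ 1 := by
      have : q ^ (2 * (k + 1)) < 1 := pow_lt_one₀ hq0.le hq1 (by omega)
      linarith
    have := hforward _ hk hne
    have heq : q ^ (2 * (k + 1)) / q ^ 2 = q ^ (2 * k) := by
      rw [div_eq_iff hq2ne]; ring
    rwa [heq] at this
  -- hence 1 ∈ B
  have hone : (1:ℝ) ∈ B := by
    have : ∀ m : ℕ, q ^ (2 * m) ∈ B → (1:ℝ) ∈ B := by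
      intro m
      induction m with
      | zero => intro h; simpa using h
      | succ m ih => intro h; exact ih (hdown m h)
    exact this n hnB
  -- going up: all powers in B
  have hup : ∀ k : ℕ, q ^ (2 * k) ∈ B := by
    intro k
    induction k with
    | zero => simpa using hone
    | succ k ih =>
      have hmem : q ^ 2 * q ^ (2 * k) ∈ ({1} : Set ℝ) ∪ (fun x => q ^ 2 * x) '' B := by
        exact Or.inr ⟨q ^ (2 * k), ih, rfl⟩
      rw [← hB] at hmem
      have heq : q ^ 2 * q ^ (2 * k) = q ^ (2 * (k + 1)) := by ring
      rcases hmem with h | h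
      · exfalso
        have hlt : q ^ (2 * (k + 1)) < 1 := pow_lt_one₀ hq0.le hq1 (by omega)
        rw [heq] at h
        simp only [Set.mem_singleton_iff] at h
        linarith
      · rwa [heq] at h
  -- 0 ∈ B by closedness
  have hzero : (0:ℝ) ∈ B := by
    have htend : Filter.Tendsto (fun k : ℕ => q ^ (2 * k)) Filter.atTop (nhds 0) := by
      have : Filter.Tendsto (fun k : ℕ => (q ^ 2) ^ k) Filter.atTop (nhds 0) :=
        tendsto_pow_atTop_nhds_zero_of_lt_one hq2.le hq21
      simpa [pow_mul] using this
    exact hBclosed.mem_of_tendsto htend (Filter.Eventually.of_forall hup)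
  ext x
  constructor
  · intro hx
    rcases eq_or_lt_of_le (hBsub hx).1 with h | h
    · exact Or.inl h.symm
    · exact Or.inr (hpos x hx h)
  · rintro (h | ⟨k, hk⟩)
    · rw [Set.mem_singleton_iff] at h; rw [h]; exact hzero
    · rw [hk]; exact hup k
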